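/- Let M be an invertible real n×n matrix with (M⁻¹)ᵢᵢ > 0 for a fixed index i. Let X = (X₁,…,Xₙ) be a random vector with values in [0,∞)ⁿ such that for every d ∈ ℝⁿ with all dⱼ ≥ 0, E[exp(−Σⱼ dⱼXⱼ)] = det(M)/det(D + M), where D is the diagonal matrix with diagonal entries d₁,…,dₙ. Then Xᵢ has the exponential distribution with rate 1/(M⁻¹)ᵢᵢ, i.e. E[exp(−dXᵢ)] = (1/(M⁻¹)ᵢᵢ)/(d + 1/(M⁻¹)ᵢᵢ) for all d ≥ 0 and the law of Xᵢ is the exponential distribution with mean (M⁻¹)ᵢᵢ. -/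

import Mathlib

open MeasureTheory ProbabilityTheory Matrix

open Real Set

section Aux

lemma det_diag_single_add {n : ℕ} (M : Matrix (Fin n) (Fin n) ℝ) (i : Fin n) (d : ℝ) :
    (Matrix.diagonal (Pi.single i d) + M).det = d * M.adjugate i i + M.det := by
  have h : Matrix.diagonal (Pi.single i d) + M
      = M.updateRow i ((d • (Pi.single i 1 : Fin n → ℝ)) + M i) := by
    ext j k
    by_cases hj : j = i
    · subst hj
      simp [Matrix.diagonal_apply, Pi.single_apply, eq_comm, mul_ite]
    · simp [Matrix.updateRow_ne hj, Matrix.diagonal_apply, Pi.single_eq_of_ne hj]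
  rw [h, Matrix.det_updateRow_add, Matrix.det_updateRow_smul, Matrix.updateRow_eq_self,
    Matrix.adjugate_apply]

/-- Integral of `exp (-t x)` against the exponential measure. -/
lemma integral_exp_neg_expMeasure {r : ℝ} (hr : 0 < r) {t : ℝ} (ht : 0 ≤ t) :
    ∫ x, Real.exp (-t * x) ∂(expMeasure r) = r / (t + r) := by
  set fnn : ℝ → NNReal :=
    fun x => Real.toNNReal (Set.indicator (Ici 0) (fun x => r * rexp (-(r * x))) x) with hfnn
  have hmeas : Measurable fnn := by
    apply Measurable.real_toNNReal
    exact Measurable.indicator (by fun_prop) measurableSet_Ici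
  have hdens : expMeasure r = volume.withDensity (fun x => (fnn x : ENNReal)) := by
    show gammaMeasure 1 r = _
    rw [gammaMeasure]
    congr 1
    funext x
    rw [show gammaPDF 1 r x = exponentialPDF r x from rfl, exponentialPDF_eq, hfnn,
      ENNReal.ofReal]
    have hind : (if 0 ≤ x then r * rexp (-(r * x)) else 0)
        = Set.indicator (Ici 0) (fun x => r * rexp (-(r * x))) x := by
      by_cases hx : (0:ℝ) ≤ x
      · rw [if_pos hx, Set.indicator_of_mem (mem_Ici.mpr hx)]
      · rw [if_neg hx, Set.indicator_of_notMem (by simpa using hx)]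
    rw [hind]
  rw [hdens, integral_withDensity_eq_integral_smul hmeas]
  have hfun : ∀ x : ℝ, fnn x • rexp (-t * x)
      = Set.indicator (Ici 0) (fun x => r * rexp (-((t + r) * x))) x := by
    intro x
    by_cases hx : x ∈ Ici (0:ℝ)
    · rw [Set.indicator_of_mem hx, hfnn]
      simp only [NNReal.smul_def, smul_eq_mul, Set.indicator_of_mem hx]
      rw [Real.coe_toNNReal _ (by positivity), mul_assoc, ← Real.exp_add]
      congr 1
      ring
    · rw [Set.indicator_of_notMem hx, hfnn]
      simp [Set.indicator_of_notMem hx]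
  simp_rw [hfun]
  rw [integral_indicator measurableSet_Ici, integral_Ici_eq_integral_Ioi,
    MeasureTheory.integral_const_mul]
  have htr : 0 < t + r := by linarith
  have hI : ∫ x in Ioi (0:ℝ), rexp (-((t + r) * x)) = (t + r)⁻¹ := by
    have h2 := MeasureTheory.integral_comp_mul_left_Ioi (fun x => rexp (-x)) 0 htr
    simp only [mul_zero, integral_exp_neg_Ioi_zero, smul_eq_mul, mul_one] at h2
    exact h2
  rw [hI]
  field_simp

/-- The exponential measure gives no mass to the negatives. -/
lemma expMeasure_ae_nonneg (r : ℝ) : ∀ᵐ x ∂(expMeasure r), 0 ≤ x := by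
  rw [ae_iff]
  have h : {x : ℝ | ¬ 0 ≤ x} = Iio 0 := by ext x; simp
  rw [h]
  show gammaMeasure 1 r (Iio 0) = 0
  rw [gammaMeasure, withDensity_apply _ measurableSet_Iio]
  exact lintegral_gammaPDF_of_nonpos le_rfl

/-- Uniqueness of Laplace transforms for probability measures on `[0, ∞)`. -/
lemma ext_of_laplace {μ ν : Measure ℝ} [IsProbabilityMeasure μ] [IsProbabilityMeasure ν]
    (hμ : ∀ᵐ x ∂μ, 0 ≤ x) (hν : ∀ᵐ x ∂ν, 0 ≤ x)
    (h : ∀ t : ℝ, 0 ≤ t → ∫ x, rexp (-t * x) ∂μ = ∫ x, rexp (-t * x) ∂ν) : μ = ν := by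
  set T : ℝ → ℝ := fun x => rexp (-x) with hT
  have hTm : Measurable T := by fun_prop
  set μ' := μ.map T with hμ'
  set ν' := ν.map T with hν'
  have : IsProbabilityMeasure μ' := Measure.isProbabilityMeasure_map hTm.aemeasurable
  have : IsProbabilityMeasure ν' := Measure.isProbabilityMeasure_map hTm.aemeasurable
  -- concentration on Icc 0 1
  have hmem : ∀ {κ : Measure ℝ}, (∀ᵐ x ∂κ, 0 ≤ x) →
      ∀ᵐ y ∂(κ.map T), y ∈ Icc (0:ℝ) 1 := by
    intro κ hκ
    refine (ae_map_iff hTm.aemeasurable measurableSet_Icc).mpr ?_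
    filter_upwards [hκ] with x hx
    refine ⟨by positivity, Real.exp_le_one_iff.mpr (by linarith)⟩
  have hμmem := hmem hμ
  have hνmem := hmem hν
  -- moments agree
  have hpowint : ∀ {κ : Measure ℝ} [IsProbabilityMeasure κ],
      (∀ᵐ y ∂κ, y ∈ Icc (0:ℝ) 1) → ∀ k : ℕ, Integrable (fun y : ℝ => y ^ k) κ := by
    intro κ _ hc k
    refine Integrable.mono' (integrable_const 1) (by fun_prop) ?_
    filter_upwards [hc] with y hy
    rw [Real.norm_eq_abs, abs_of_nonneg (pow_nonneg hy.1 k)]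
    exact pow_le_one₀ hy.1 hy.2
  have hmom : ∀ k : ℕ, ∫ y, y ^ k ∂μ' = ∫ y, y ^ k ∂ν' := by
    intro k
    have key : ∀ κ : Measure ℝ, ∫ y, y ^ k ∂(κ.map T) = ∫ x, rexp (-(k:ℝ) * x) ∂κ := by
      intro κ
      rw [integral_map hTm.aemeasurable (by fun_prop)]
      congr 1
      funext x
      rw [hT, ← Real.exp_nat_mul]
      ring_nf
    rw [hμ', hν', key, key, h _ (Nat.cast_nonneg k)]
  -- polynomials agree
  have hpoly : ∀ p : Polynomial ℝ, ∫ y, p.eval y ∂μ' = ∫ y, p.eval y ∂ν' := by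
    intro p
    simp_rw [Polynomial.eval_eq_sum_range]
    rw [integral_finset_sum _ (fun k _ => (hpowint hμmem k).const_mul _),
      integral_finset_sum _ (fun k _ => (hpowint hνmem k).const_mul _)]
    refine Finset.sum_congr rfl fun k _ => ?_
    rw [integral_const_mul, integral_const_mul, hmom k]
  -- bounded continuous functions agree
  have hbc : ∀ g : ℝ → ℝ, Continuous g → (∃ C, ∀ x, |g x| ≤ C) →
      ∫ y, g y ∂μ' = ∫ y, g y ∂ν' := by
    rintro g hg ⟨C, hC⟩
    have hgi : ∀ (κ : Measure ℝ) [IsProbabilityMeasure κ], Integrable g κ := by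
      intro κ _
      exact Integrable.mono' (integrable_const C) hg.aestronglyMeasurable
        (ae_of_all _ fun x => hC x)
    have key : ∀ ε : ℝ, 0 < ε → |∫ y, g y ∂μ' - ∫ y, g y ∂ν'| ≤ 2 * ε := by
      intro ε hε
      -- Weierstrass approximation on Icc 0 1
      obtain ⟨q, hqmem, hqdist⟩ : ∃ q ∈ (polynomialFunctions (Icc (0:ℝ) 1) : Set _),
          dist ((ContinuousMap.mk g hg).restrict (Icc (0:ℝ) 1)) q < ε := by
        have hcl : ((ContinuousMap.mk g hg).restrict (Icc (0:ℝ) 1)) ∈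
            closure (polynomialFunctions (Icc (0:ℝ) 1) : Set _) := by
          rw [← Subalgebra.topologicalClosure_coe]
          exact continuousMap_mem_polynomialFunctions_closure 0 1 _
        exact Metric.mem_closure_iff.mp hcl ε hε
      rw [polynomialFunctions_coe] at hqmem
      obtain ⟨p, rfl⟩ := hqmem
      have hclose : ∀ y ∈ Icc (0:ℝ) 1, |g y - p.eval y| ≤ ε := by
        intro y hy
        have hd := ContinuousMap.dist_apply_le_dist
          (f := (ContinuousMap.mk g hg).restrict (Icc (0:ℝ) 1))
          (g := (Polynomial.toContinuousMapOnAlgHom (Icc (0:ℝ) 1)) p) ⟨y, hy⟩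
        have hd2 : dist (g y) (p.eval y) ≤ ε := by
          refine le_trans ?_ hqdist.le
          convert hd using 2 <;> first | simp | rfl
        rwa [Real.dist_eq] at hd2
      have hpint : ∀ (κ : Measure ℝ) [IsProbabilityMeasure κ], (∀ᵐ y ∂κ, y ∈ Icc (0:ℝ) 1) →
          Integrable (fun y => p.eval y) κ := by
        intro κ _ hc
        refine Integrable.mono' (integrable_const (∑ k ∈ Finset.range (p.natDegree + 1),
          |p.coeff k|)) p.continuous.aestronglyMeasurable ?_
        filter_upwards [hc] with y hy
        rw [Real.norm_eq_abs, Polynomial.eval_eq_sum_range]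
        refine (Finset.abs_sum_le_sum_abs _ _).trans (Finset.sum_le_sum fun k _ => ?_)
        rw [abs_mul]
        calc |p.coeff k| * |y ^ k| ≤ |p.coeff k| * 1 := by
              refine mul_le_mul_of_nonneg_left ?_ (abs_nonneg _)
              rw [abs_of_nonneg (pow_nonneg hy.1 k)]
              exact pow_le_one₀ hy.1 hy.2
          _ = |p.coeff k| := mul_one _
      have hdiff : ∀ (κ : Measure ℝ) [IsProbabilityMeasure κ], (∀ᵐ y ∂κ, y ∈ Icc (0:ℝ) 1) →
          |∫ y, g y ∂κ - ∫ y, p.eval y ∂κ| ≤ ε := by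
        intro κ _ hc
        rw [← integral_sub (hgi κ) (hpint κ hc)]
        have hb := norm_integral_le_of_norm_le_const (μ := κ)
          (f := fun y => g y - p.eval y) (C := ε) ?_
        · simpa using hb
        · filter_upwards [hc] with y hy
          rw [Real.norm_eq_abs]
          exact hclose y hy
      have h1 := hdiff μ' hμmem
      have h2 := hdiff ν' hνmem
      have h3 := hpoly p
      calc |∫ y, g y ∂μ' - ∫ y, g y ∂ν'|
          = |(∫ y, g y ∂μ' - ∫ y, p.eval y ∂μ') - (∫ y, g y ∂ν' - ∫ y, p.eval y ∂ν')| := by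
            rw [h3]; ring_nf
        _ ≤ |∫ y, g y ∂μ' - ∫ y, p.eval y ∂μ'| + |∫ y, g y ∂ν' - ∫ y, p.eval y ∂ν'| :=
            abs_sub _ _
        _ ≤ 2 * ε := by linarith
    by_contra hne
    have habs : 0 < |∫ y, g y ∂μ' - ∫ y, g y ∂ν'| := by
      rw [abs_pos, sub_ne_zero]; exact hne
    have := key (|∫ y, g y ∂μ' - ∫ y, g y ∂ν'| / 3) (by linarith)
    linarith
  -- measures on ℝ agree
  have hμν' : μ' = ν' := by
    apply ext_of_forall_lintegral_eq_of_IsFiniteMeasure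
    intro f
    have h1 := BoundedContinuousFunction.lintegral_lt_top_of_nnreal μ' f
    have h2 := BoundedContinuousFunction.lintegral_lt_top_of_nnreal ν' f
    rw [← ENNReal.toReal_eq_toReal_iff' h1.ne h2.ne,
      BoundedContinuousFunction.toReal_lintegral_coe_eq_integral,
      BoundedContinuousFunction.toReal_lintegral_coe_eq_integral]
    refine hbc _ (NNReal.continuous_coe.comp f.continuous) ⟨(nndist 0 f : ℝ), fun x => ?_⟩
    rw [abs_of_nonneg (NNReal.coe_nonneg _), NNReal.coe_le_coe]
    exact BoundedContinuousFunction.apply_le_nndist_zero f x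
  -- recover the original measures
  have hinv : ∀ κ : Measure ℝ, (∀ᵐ x ∂κ, 0 ≤ x) →
      (κ.map T).map (fun y => -Real.log y) = κ := by
    intro κ hκ
    rw [Measure.map_map (g := fun y => -Real.log y) (Real.measurable_log.neg) hTm]
    have hcongr : κ.map ((fun y => -Real.log y) ∘ T) = κ.map id := by
      apply Measure.map_congr
      filter_upwards [hκ] with x hx
      simp [T, Real.log_exp]
    rwa [Measure.map_id] at hcongr
  rw [← hinv μ hμ, ← hinv ν hν]
  exact congrArg (Measure.map fun y => -Real.log y) hμν'

end Aux

/-- If the `[0,∞)ⁿ`-valued random vector `X` has joint Laplace transform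
`det M / det (D + M)` with `M` invertible and `(M⁻¹)ᵢᵢ > 0`, then `Xᵢ` is exponentially
distributed with rate `1/(M⁻¹)ᵢᵢ`: its Laplace transform is `λ/(d + λ)` with
`λ = 1/(M⁻¹)ᵢᵢ`, and its law is the exponential distribution with mean `(M⁻¹)ᵢᵢ`. -/
theorem marginal_is_exponential {n : ℕ} (M : Matrix (Fin n) (Fin n) ℝ)
    (hM : IsUnit M.det) (i : Fin n) (hMi : 0 < M⁻¹ i i)
    {Ω : Type*} [MeasurableSpace Ω] (P : Measure Ω) [IsProbabilityMeasure P]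
    (X : Ω → Fin n → ℝ) (hXm : Measurable X) (hX0 : ∀ ω j, 0 ≤ X ω j)
    (hlap : ∀ d : Fin n → ℝ, (∀ j, 0 ≤ d j) →
      ∫ ω, Real.exp (-(∑ j, d j * X ω j)) ∂P = M.det / (Matrix.diagonal d + M).det) :
    (∀ d : ℝ, 0 ≤ d →
        ∫ ω, Real.exp (-d * X ω i) ∂P = (M⁻¹ i i)⁻¹ / (d + (M⁻¹ i i)⁻¹)) ∧
      Measure.map (fun ω => X ω i) P = expMeasure (M⁻¹ i i)⁻¹ := by
  have hXim : Measurable fun ω => X ω i := (measurable_pi_apply i).comp hXm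
  have hdet : M.det ≠ 0 := hM.ne_zero
  have hadj : M.adjugate i i = M⁻¹ i i * M.det := by
    rw [Matrix.inv_def, Ring.inverse_eq_inv]
    simp only [Matrix.smul_apply, smul_eq_mul]
    field_simp
  have part1 : ∀ d : ℝ, 0 ≤ d →
      ∫ ω, Real.exp (-d * X ω i) ∂P = (M⁻¹ i i)⁻¹ / (d + (M⁻¹ i i)⁻¹) := by
    intro d hd
    have hnn : ∀ j, 0 ≤ (Pi.single i d : Fin n → ℝ) j := by
      intro j
      by_cases hj : j = i
      · subst hj; simpa using hd
      · simp [Pi.single_eq_of_ne hj]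
    have h1 := hlap (Pi.single i d) hnn
    have hsum : (fun ω => Real.exp (-(∑ j, (Pi.single i d : Fin n → ℝ) j * X ω j)))
        = fun ω => Real.exp (-d * X ω i) := by
      funext ω
      congr 1
      rw [Finset.sum_eq_single i (fun j _ hj => by simp [Pi.single_eq_of_ne hj])
        (fun hj => absurd (Finset.mem_univ i) hj)]
      simp [Pi.single_eq_same]
    rw [hsum, det_diag_single_add, hadj] at h1
    rw [h1]
    have hpos : 0 < d * M⁻¹ i i + 1 := by positivity
    set a := M⁻¹ i i with haeq
    have ha0 : a ≠ 0 := hMi.ne'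
    have hden : d * (a * M.det) + M.det ≠ 0 := by
      have hre : d * (a * M.det) + M.det = M.det * (d * a + 1) := by ring
      rw [hre]
      exact mul_ne_zero hdet hpos.ne'
    rw [div_eq_div_iff hden (by positivity)]
    field_simp
  refine ⟨part1, ?_⟩
  have hprob : IsProbabilityMeasure (Measure.map (fun ω => X ω i) P) :=
    Measure.isProbabilityMeasure_map hXim.aemeasurable
  have hprob2 : IsProbabilityMeasure (expMeasure (M⁻¹ i i)⁻¹) :=
    isProbabilityMeasure_expMeasure (inv_pos.mpr hMi)
  apply ext_of_laplace
  · rw [ae_map_iff hXim.aemeasurable (measurableSet_Ici (a := (0:ℝ)))]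
    exact ae_of_all _ fun ω => hX0 ω i
  · exact expMeasure_ae_nonneg _
  · intro t ht
    have hsm : AEStronglyMeasurable (fun x : ℝ => rexp (-t * x))
        (Measure.map (fun ω => X ω i) P) :=
      Continuous.aestronglyMeasurable (by fun_prop)
    rw [integral_map hXim.aemeasurable hsm,
      integral_exp_neg_expMeasure (inv_pos.mpr hMi) ht, part1 t ht]
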